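/- Let d_i > 0 and e_i ∈ ℝ for i = 1,…,n with e_i ≠ 0 for at least one i. Then the function g(γ) = γ·∑_{i=1}^n d_i² + ∑_{i=1}^n e_i²·exp(−γ·d_i²) is strictly convex on ℝ and hence has at most one minimizer on any convex set. -/

import Mathlib

lemma exp_term_strictConvex (a : ℝ) (ha : a ≠ 0) (c : ℝ) (hc : 0 < c) :
    StrictConvexOn ℝ Set.univ (fun γ : ℝ => c * Real.exp (-γ * a)) := by
  refine ⟨convex_univ, ?_⟩
  intro x _ y _ hxy t s ht hs hts
  have hne : -x * a ≠ -y * a := by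
    intro h
    apply hxy
    exact neg_inj.mp (mul_right_cancel₀ ha h)
  have := strictConvexOn_exp.2 (Set.mem_univ (-x * a)) (Set.mem_univ (-y * a)) hne ht hs hts
  simp only [smul_eq_mul] at this ⊢
  have harg : -(t * x + s * y) * a = t * (-x * a) + s * (-y * a) := by ring
  rw [harg]
  calc c * Real.exp (t * (-x * a) + s * (-y * a))
      < c * (t * Real.exp (-x * a) + s * Real.exp (-y * a)) := by
        exact (mul_lt_mul_iff_right₀ hc).mpr this
    _ = t * (c * Real.exp (-x * a)) + s * (c * Real.exp (-y * a)) := by ring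

lemma exp_term_convex (a : ℝ) (ha : a ≠ 0) (c : ℝ) (hc : 0 ≤ c) :
    ConvexOn ℝ Set.univ (fun γ : ℝ => c * Real.exp (-γ * a)) := by
  rcases eq_or_lt_of_le hc with h | h
  · simpa [← h] using convexOn_const (0 : ℝ) convex_univ
  · exact (exp_term_strictConvex a ha c h).convexOn

lemma sum_convex {ι : Type*} [DecidableEq ι] (t : Finset ι) (f : ι → ℝ → ℝ)
    (hf : ∀ i ∈ t, ConvexOn ℝ Set.univ (f i)) :
    ConvexOn ℝ Set.univ (fun γ => ∑ i ∈ t, f i γ) := by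
  induction t using Finset.induction_on with
  | empty => simpa using convexOn_const (0 : ℝ) convex_univ
  | @insert a s hni ih =>
    simp only [Finset.sum_insert hni]
    exact (hf a (Finset.mem_insert_self a s)).add
      (ih fun i hi => hf i (Finset.mem_insert_of_mem hi))

theorem stmt_7 (n : ℕ) (d e : Fin n → ℝ) (hd : ∀ i, 0 < d i)
    (he : ∃ i, e i ≠ 0) :
    let g : ℝ → ℝ := fun γ =>
      γ * ∑ i, (d i) ^ 2 + ∑ i, (e i) ^ 2 * Real.exp (-γ * (d i) ^ 2)
    StrictConvexOn ℝ Set.univ g ∧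
    ∀ s : Set ℝ, Convex ℝ s → ∀ a ∈ s, ∀ b ∈ s,
      IsMinOn g s a → IsMinOn g s b → a = b := by
  intro g
  obtain ⟨i₀, hi₀⟩ := he
  have hstrict : StrictConvexOn ℝ Set.univ g := by
    have hlin : ConvexOn ℝ Set.univ (fun γ : ℝ => γ * ∑ i, (d i) ^ 2) := by
      have : ConvexOn ℝ Set.univ (id : ℝ → ℝ) := convexOn_id convex_univ
      simpa [mul_comm] using this.smul (Finset.sum_nonneg fun i _ => sq_nonneg (d i))
    have hsum : StrictConvexOn ℝ Set.univ
        (fun γ => ∑ i, (e i) ^ 2 * Real.exp (-γ * (d i) ^ 2)) := by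
      have hsplit : (fun γ : ℝ => ∑ i, (e i) ^ 2 * Real.exp (-γ * (d i) ^ 2))
          = (fun γ => (e i₀) ^ 2 * Real.exp (-γ * (d i₀) ^ 2))
            + (fun γ => ∑ i ∈ Finset.univ.erase i₀,
                (e i) ^ 2 * Real.exp (-γ * (d i) ^ 2)) := by
        funext γ
        simp [Finset.add_sum_erase _ _ (Finset.mem_univ i₀)]
      rw [hsplit]
      refine StrictConvexOn.add_convexOn ?_ ?_
      · exact exp_term_strictConvex _ (by have := hd i₀; positivity) _ (by positivity)
      · exact sum_convex _ _ fun i _ =>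
          exp_term_convex _ (by have := hd i; positivity) _ (sq_nonneg _)
    exact hlin.add_strictConvexOn hsum
  exact ⟨hstrict, fun s hs a ha b hb hma hmb =>
    (hstrict.subset (Set.subset_univ s) hs).eq_of_isMinOn hma hmb ha hb⟩
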